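/- For any two intermediate fields L and L' of K(t)/K(f), the partition of their intersection satisfies P_{L ∩ L'} = P_L ∨ P_{L'}, where P ∨ Q denotes the join of partitions, i.e., the finest partition of {1, …, r} that is refined by both P and Q. -/
import Mathlib


open Polynomial

/-- `Φ_f(x) := f_n(x) − f(t)·f_d(x) ∈ K(t)[x]`, where `f = f_n/f_d` with `f_n, f_d` coprime. -/
noncomputable def Phi {K : Type*} [Field K] (g : RatFunc K) : Polynomial (RatFunc K) :=
  g.num.map (algebraMap K (RatFunc K)) - Polynomial.C g * (g.denom.map (algebraMap K (RatFunc K)))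

/-- A rational function is nonconstant if it is not of the form `C c`. -/
def Nonconst {K : Type*} [Field K] (g : RatFunc K) : Prop := ∀ c : K, g ≠ RatFunc.C c

/-- All the `P`-products `∏_{j ∈ A} F_j`, for `A` a part of the partition `P`, have all
their coefficients in the set `L`. -/
def ProdsIn {K : Type*} [Field K] {r : ℕ} (F : Fin r → Polynomial (RatFunc K))
    (L : Set (RatFunc K)) (P : Finpartition (Finset.univ : Finset (Fin r))) : Prop :=
  ∀ A ∈ P.parts, ∀ m, (∏ j ∈ A, F j).coeff m ∈ L

/-- `P` refines `Q`: every part of `P` is contained in some part of `Q`. -/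
def Refines {r : ℕ} (P Q : Finpartition (Finset.univ : Finset (Fin r))) : Prop :=
  ∀ A ∈ P.parts, ∃ B ∈ Q.parts, A ⊆ B

/-- `P` is the partition of the intermediate field `L`: all its products lie in `L[x]`
and its number of parts is maximal with this property. -/
def IsPartitionOf {K : Type*} [Field K] {r : ℕ} (F : Fin r → Polynomial (RatFunc K))
    (L : Set (RatFunc K)) (P : Finpartition (Finset.univ : Finset (Fin r))) : Prop :=
  ProdsIn F L P ∧
    ∀ Q : Finpartition (Finset.univ : Finset (Fin r)),
      ProdsIn F L Q → Q.parts.card ≤ P.parts.card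

section Aux

variable {K : Type*} [Field K]

lemma aux_mem_lifts_iff (L : IntermediateField K (RatFunc K))
    (p : Polynomial (RatFunc K)) :
    p ∈ Polynomial.lifts (algebraMap ↥L (RatFunc K)) ↔
      ∀ n, p.coeff n ∈ (L : Set (RatFunc K)) := by
  rw [Polynomial.lifts_iff_coeff_lifts]
  have hrange : Set.range (algebraMap ↥L (RatFunc K)) = (L : Set (RatFunc K)) := by
    ext x
    constructor
    · rintro ⟨y, rfl⟩; exact y.2
    · intro hx; exact ⟨⟨x, hx⟩, rfl⟩
  rw [hrange]

lemma aux_gcd_coeff_mem [DecidableEq (RatFunc K)]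
    (L : IntermediateField K (RatFunc K)) (p q : Polynomial (RatFunc K))
    (hp : ∀ n, p.coeff n ∈ (L : Set (RatFunc K))) (hq : ∀ n, q.coeff n ∈ (L : Set (RatFunc K))) :
    ∀ n, (EuclideanDomain.gcd p q).coeff n ∈ (L : Set (RatFunc K)) := by
  classical
  obtain ⟨p', hp'⟩ := (Polynomial.mem_lifts _).1 ((aux_mem_lifts_iff L p).2 hp)
  obtain ⟨q', hq'⟩ := (Polynomial.mem_lifts _).1 ((aux_mem_lifts_iff L q).2 hq)
  have h := Polynomial.gcd_map (p := p') (q := q') (algebraMap ↥L (RatFunc K))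
  rw [hp', hq'] at h
  intro n
  rw [h, Polynomial.coeff_map]
  exact ((EuclideanDomain.gcd p' q').coeff n).2

lemma aux_coprime_prod {r : ℕ} (F : Fin r → Polynomial (RatFunc K))
    (hcop : ∀ i j, i ≠ j → IsCoprime (F i) (F j)) {S T : Finset (Fin r)} (h : Disjoint S T) :
    IsCoprime (∏ j ∈ S, F j) (∏ j ∈ T, F j) :=
  IsCoprime.prod_left fun i hi => IsCoprime.prod_right fun j hj =>
    hcop i j fun e => Finset.disjoint_left.1 h hi (e ▸ hj)

lemma aux_prodsIn_inf [DecidableEq (RatFunc K)] {r : ℕ}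
    (F : Fin r → Polynomial (RatFunc K)) (hFm : ∀ j, (F j).Monic)
    (hcop : ∀ i j, i ≠ j → IsCoprime (F i) (F j))
    (L : IntermediateField K (RatFunc K))
    {P Q : Finpartition (Finset.univ : Finset (Fin r))}
    (hP : ProdsIn F (L : Set (RatFunc K)) P) (hQ : ProdsIn F (L : Set (RatFunc K)) Q) :
    ProdsIn F (L : Set (RatFunc K)) (P ⊓ Q) := by
  intro A hA m
  rw [Finpartition.parts_inf] at hA
  obtain ⟨⟨b, c⟩, hbc, rfl⟩ := Finset.mem_image.1 (Finset.mem_of_mem_erase hA)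
  rw [Finset.mem_product] at hbc
  have hbcinter : (b ⊓ c : Finset (Fin r)) = b ∩ c := rfl
  rw [hbcinter]
  set g0 : Polynomial (RatFunc K) := ∏ j ∈ b ∩ c, F j with hg0def
  have hg0m : g0.Monic := Polynomial.monic_prod_of_monic _ _ fun j _ => (hFm j)
  have hbsplit : ∏ j ∈ b, F j = g0 * ∏ j ∈ b \ c, F j :=
    (Finset.prod_inter_mul_prod_diff b c F).symm
  have hcsplit : ∏ j ∈ c, F j = g0 * ∏ j ∈ c \ b, F j := by
    rw [hg0def, Finset.inter_comm]
    exact (Finset.prod_inter_mul_prod_diff c b F).symm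
  set d := EuclideanDomain.gcd (∏ j ∈ b, F j) (∏ j ∈ c, F j) with hddef
  have hd : ∀ n, d.coeff n ∈ (L : Set (RatFunc K)) :=
    aux_gcd_coeff_mem L _ _ (hP b hbc.1) (hQ c hbc.2)
  have hg0d : g0 ∣ d :=
    EuclideanDomain.dvd_gcd
      (Finset.prod_dvd_prod_of_subset _ _ F Finset.inter_subset_left)
      (by rw [hg0def, Finset.inter_comm]
          exact Finset.prod_dvd_prod_of_subset _ _ F Finset.inter_subset_left)
  obtain ⟨e, hde⟩ := hg0d
  have h1 : g0 * e ∣ g0 * ∏ j ∈ b \ c, F j := by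
    rw [← hde, ← hbsplit]; exact EuclideanDomain.gcd_dvd_left _ _
  have h2 : g0 * e ∣ g0 * ∏ j ∈ c \ b, F j := by
    rw [← hde, ← hcsplit]; exact EuclideanDomain.gcd_dvd_right _ _
  have he1 : e ∣ ∏ j ∈ b \ c, F j := (mul_dvd_mul_iff_left hg0m.ne_zero).1 h1
  have he2 : e ∣ ∏ j ∈ c \ b, F j := (mul_dvd_mul_iff_left hg0m.ne_zero).1 h2
  have hdisj : Disjoint (b \ c) (c \ b) :=
    Finset.disjoint_left.2 fun x hx hx2 => (Finset.mem_sdiff.1 hx).2 (Finset.mem_sdiff.1 hx2).1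
  have hu : IsUnit e := (aux_coprime_prod F hcop hdisj).isUnit_of_dvd' he1 he2
  obtain ⟨u, hu2, hCu⟩ := Polynomial.isUnit_iff.1 hu
  have hdeq : d = g0 * Polynomial.C u := by rw [hde, hCu]
  have hlc : d.leadingCoeff = u := by
    rw [hdeq, Polynomial.leadingCoeff_mul, hg0m.leadingCoeff, Polynomial.leadingCoeff_C, one_mul]
  have huL : u ∈ L := by
    have := hd d.natDegree
    rw [← Polynomial.leadingCoeff, hlc] at this
    exact this
  have hune : u ≠ 0 := hu2.ne_zero
  have hcoeff : g0.coeff m = d.coeff m * u⁻¹ := by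
    rw [hdeq, Polynomial.coeff_mul_C]
    field_simp
  rw [hcoeff]
  exact mul_mem (hd m) (L.inv_mem huL)

lemma aux_finpartition_eq {α : Type*} [DecidableEq α] {s : Finset α}
    {M P : Finpartition s} (h : M ≤ P) (hc : M.parts.card ≤ P.parts.card) : M = P := by
  classical
  set f : Finset α → Finset α := fun b => if hb : ∃ c ∈ P.parts, b ≤ c then hb.choose else ∅
    with hfdef
  have hf1 : ∀ b ∈ M.parts, f b ∈ P.parts := by
    intro b hb
    have hex := h hb
    simp only [hfdef, dif_pos hex]
    exact hex.choose_spec.1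
  have hf2 : ∀ b ∈ M.parts, b ⊆ f b := by
    intro b hb
    have hex := h hb
    simp only [hfdef, dif_pos hex]
    exact hex.choose_spec.2
  have hsurj : P.parts ⊆ M.parts.image f := by
    intro b hb
    obtain ⟨c, hc, hcb⟩ := Finpartition.exists_le_of_le h hb
    have hbe : b = f c := by
      by_contra hne
      have hdis : Disjoint b (f c) := P.disjoint hb (hf1 c hc) hne
      have : c ≤ ⊥ := hdis hcb (hf2 c hc)
      exact M.ne_bot hc (le_bot_iff.1 this)
    exact hbe ▸ Finset.mem_image_of_mem f hc
  have h1 : P.parts.card ≤ (M.parts.image f).card := Finset.card_le_card hsurj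
  have h2 : (M.parts.image f).card ≤ M.parts.card := Finset.card_image_le
  have hinj : Set.InjOn f M.parts := Finset.injOn_of_card_image_eq (by omega)
  have heq : ∀ b ∈ M.parts, f b = b := by
    intro b hb
    refine Finset.Subset.antisymm ?_ (hf2 b hb)
    intro x hx
    have hxs : x ∈ s := (P.le (hf1 b hb)) hx
    obtain ⟨a, ha, hxa⟩ := M.exists_mem hxs
    have hfab : f a = f b :=
      P.eq_of_mem_parts (hf1 a ha) (hf1 b hb) (hf2 a ha hxa) hx
    exact (hinj ha hb hfab) ▸ hxa
  have himg : M.parts.image f = M.parts := by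
    rw [Finset.image_congr (g := id) (fun b hb => heq b hb), Finset.image_id]
  have hparts : M.parts = P.parts := by
    refine Finset.Subset.antisymm (fun b hb => (heq b hb) ▸ hf1 b hb) ?_
    rw [← himg]; exact hsurj
  ext b
  rw [hparts]

lemma aux_key [DecidableEq (RatFunc K)] {r : ℕ}
    (F : Fin r → Polynomial (RatFunc K)) (hFm : ∀ j, (F j).Monic)
    (hcop : ∀ i j, i ≠ j → IsCoprime (F i) (F j))
    (L : IntermediateField K (RatFunc K))
    {P Q : Finpartition (Finset.univ : Finset (Fin r))}
    (hP : ProdsIn F (L : Set (RatFunc K)) P)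
    (hPmax : ∀ Q : Finpartition (Finset.univ : Finset (Fin r)),
      ProdsIn F (L : Set (RatFunc K)) Q → Q.parts.card ≤ P.parts.card)
    (hQ : ProdsIn F (L : Set (RatFunc K)) Q) : P ≤ Q := by
  have hinf := aux_prodsIn_inf F hFm hcop L hP hQ
  have h1 : (P ⊓ Q).parts.card ≤ P.parts.card := hPmax _ hinf
  have heq : P ⊓ Q = P := aux_finpartition_eq inf_le_left h1
  have h2 : P ⊓ Q ≤ Q := inf_le_right
  rwa [heq] at h2

lemma aux_prodsIn_of_le {r : ℕ}
    (F : Fin r → Polynomial (RatFunc K)) (L : IntermediateField K (RatFunc K))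
    {P R : Finpartition (Finset.univ : Finset (Fin r))}
    (h : P ≤ R) (hP : ProdsIn F (L : Set (RatFunc K)) P) :
    ProdsIn F (L : Set (RatFunc K)) R := by
  classical
  intro B hB m
  set T := P.parts.filter (· ⊆ B) with hT
  have hBT : B = T.biUnion id := by
    ext x
    simp only [Finset.mem_biUnion, hT, Finset.mem_filter, id]
    constructor
    · intro hx
      obtain ⟨a, ha, hxa⟩ := P.exists_mem (Finset.mem_univ x)
      obtain ⟨B', hB', haB'⟩ := h ha
      have hBB : B' = B := R.eq_of_mem_parts hB' hB (haB' hxa) hx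
      exact ⟨a, ⟨ha, hBB ▸ haB'⟩, hxa⟩
    · rintro ⟨a, ⟨ha, haB⟩, hxa⟩; exact haB hxa
  have hdisj : (↑T : Set (Finset (Fin r))).PairwiseDisjoint id :=
    P.disjoint.subset (by intro t ht; exact (Finset.mem_filter.1 ht).1)
  have hprod : ∏ j ∈ B, F j = ∏ a ∈ T, ∏ j ∈ a, F j := by
    rw [hBT, Finset.prod_biUnion hdisj]; rfl
  rw [hprod]
  have hmem : (∏ a ∈ T, ∏ j ∈ a, F j) ∈ Polynomial.lifts (algebraMap ↥L (RatFunc K)) :=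
    prod_mem fun a ha => (aux_mem_lifts_iff L _).2 (hP a (Finset.mem_filter.1 ha).1)
  exact (aux_mem_lifts_iff L _).1 hmem m

end Aux

lemma aux_refines_iff {r : ℕ} {P Q : Finpartition (Finset.univ : Finset (Fin r))} :
    Refines P Q ↔ P ≤ Q := Iff.rfl

/-- For intermediate fields `L, L'` of `K(t)/K(f)`, the partition of `L ∩ L'` is the
join `P_L ∨ P_{L'}`: the finest partition of `{1,…,r}` refined by both `P_L` and
`P_{L'}`. -/
theorem stmt_16 {K : Type*} [Field K] (f : RatFunc K) (hf : Nonconst f)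
    (hmonic : (Phi f).Monic) (hsep : (Phi f).Separable)
    (r : ℕ) (hr : 0 < r) (F : Fin r → Polynomial (RatFunc K))
    (hFm : ∀ j, (F j).Monic) (hFirr : ∀ j, Irreducible (F j))
    (hfact : Phi f = ∏ j, F j)
    (hF1 : F ⟨0, hr⟩ = Polynomial.X - Polynomial.C RatFunc.X)
    (L L' : IntermediateField K (RatFunc K))
    (hL : IntermediateField.adjoin K {f} ≤ L) (hL' : IntermediateField.adjoin K {f} ≤ L')
    (PL PL' PI : Finpartition (Finset.univ : Finset (Fin r)))
    (hPL : IsPartitionOf F (L : Set (RatFunc K)) PL)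
    (hPL' : IsPartitionOf F (L' : Set (RatFunc K)) PL')
    (hPI : IsPartitionOf F ((L ⊓ L' : IntermediateField K (RatFunc K)) : Set (RatFunc K)) PI) :
    Refines PL PI ∧ Refines PL' PI ∧
      ∀ R : Finpartition (Finset.univ : Finset (Fin r)),
        Refines PL R → Refines PL' R → Refines PI R := by
  classical
  have hcop : ∀ i j, i ≠ j → IsCoprime (F i) (F j) := by
    intro i j hij
    have hdvd : F i * F j ∣ Phi f := by
      rw [hfact, ← Finset.prod_pair hij]
      exact Finset.prod_dvd_prod_of_subset _ _ F (Finset.subset_univ _)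
    exact (hsep.of_dvd hdvd).isCoprime
  have hIL : ProdsIn F (L : Set (RatFunc K)) PI := by
    intro A hA m
    have h := hPI.1 A hA m
    simp only [SetLike.mem_coe, IntermediateField.mem_inf] at h ⊢
    exact h.1
  have hIL' : ProdsIn F (L' : Set (RatFunc K)) PI := by
    intro A hA m
    have h := hPI.1 A hA m
    simp only [SetLike.mem_coe, IntermediateField.mem_inf] at h ⊢
    exact h.2
  have h1 : PL ≤ PI := aux_key F hFm hcop L hPL.1 hPL.2 hIL
  have h2 : PL' ≤ PI := aux_key F hFm hcop L' hPL'.1 hPL'.2 hIL'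
  refine ⟨(aux_refines_iff).2 h1, (aux_refines_iff).2 h2, ?_⟩
  intro R hR hR'
  have hRL : ProdsIn F (L : Set (RatFunc K)) R :=
    aux_prodsIn_of_le F L ((aux_refines_iff).1 hR) hPL.1
  have hRL' : ProdsIn F (L' : Set (RatFunc K)) R :=
    aux_prodsIn_of_le F L' ((aux_refines_iff).1 hR') hPL'.1
  have hRI : ProdsIn F ((L ⊓ L' : IntermediateField K (RatFunc K)) : Set (RatFunc K)) R := by
    intro A hA m
    simp only [SetLike.mem_coe, IntermediateField.mem_inf]
    exact ⟨hRL A hA m, hRL' A hA m⟩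
  exact (aux_refines_iff).2 (aux_key F hFm hcop (L ⊓ L') hPI.1 hPI.2 hRI)
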